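/- Let μ be a finite non-atomic vector-valued measure (with values in ℝ^d) on a measurable space, with μ(∅) = 0 and total measure μ(U). Then for every β ∈ [0,1] there exists a measurable set V_β with μ(V_β) = β·μ(U). Moreover, the complement V_β^c satisfies μ(V_β^c) = (1−β)·μ(U). -/

import Mathlib

open MeasureTheory Set
open scoped ENNReal NNReal

namespace Lyap

variable {X : Type*} [MeasurableSpace X]

/-- Non-atomicity for an `ℝ≥0∞`-valued measure. -/
def NA (ν : Measure X) : Prop :=
  ∀ A : Set X, MeasurableSet A → ν A ≠ 0 →
    ∃ B ⊆ A, MeasurableSet B ∧ ν B ≠ 0 ∧ ν B ≠ ν A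

lemma half_small {ν : Measure X} [IsFiniteMeasure ν] (hna : NA ν) {A : Set X}
    (hA : MeasurableSet A) (h0 : ν A ≠ 0) :
    ∃ B ⊆ A, MeasurableSet B ∧ 0 < ν B ∧ ν B ≤ ν A / 2 := by
  obtain ⟨B, hBA, hBm, hB0, hBne⟩ := hna A hA h0
  have hfin : ν A ≠ ⊤ := measure_ne_top ν A
  have hBle : ν B ≤ ν A := measure_mono hBA
  have hBlt : ν B < ν A := lt_of_le_of_ne hBle hBne
  have hdiff : ν (A \ B) = ν A - ν B := measure_diff hBA hBm.nullMeasurableSet (measure_ne_top ν B)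
  have hd0 : 0 < ν (A \ B) := by
    rw [hdiff]
    exact tsub_pos_of_lt hBlt
  rcases le_total (ν B) (ν A / 2) with h | h
  · exact ⟨B, hBA, hBm, pos_iff_ne_zero.mpr hB0, h⟩
  · refine ⟨A \ B, diff_subset, hA.diff hBm, hd0, ?_⟩
    rw [hdiff]
    have : ν A - ν B ≤ ν A - ν A / 2 := tsub_le_tsub_left h _
    calc ν A - ν B ≤ ν A - ν A / 2 := this
      _ = ν A / 2 := ENNReal.sub_half hfin

lemma small {ν : Measure X} [IsFiniteMeasure ν] (hna : NA ν) {A : Set X}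
    (hA : MeasurableSet A) (h0 : ν A ≠ 0) {ε : ℝ≥0∞} (hε : 0 < ε) :
    ∃ B ⊆ A, MeasurableSet B ∧ 0 < ν B ∧ ν B < ε := by
  have key : ∀ n : ℕ, ∃ B ⊆ A, MeasurableSet B ∧ 0 < ν B ∧ ν B ≤ ν A / 2 ^ n := by
    intro n
    induction n with
    | zero => exact ⟨A, subset_rfl, hA, pos_iff_ne_zero.mpr h0, by simp⟩
    | succ n ih =>
      obtain ⟨B, hBA, hBm, hB0, hBle⟩ := ih
      obtain ⟨C, hCB, hCm, hC0, hCle⟩ := half_small hna hBm hB0.ne'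
      refine ⟨C, hCB.trans hBA, hCm, hC0, ?_⟩
      calc ν C ≤ ν B / 2 := hCle
        _ ≤ ν A / 2 ^ n / 2 := ENNReal.div_le_div_right hBle 2
        _ = ν A / 2 ^ (n + 1) := by rw [pow_succ, div_eq_mul_inv, div_eq_mul_inv, div_eq_mul_inv, ENNReal.mul_inv (by simp) (by simp), mul_assoc]
  -- choose n with ν A / 2 ^ n < ε
  obtain ⟨n, hn⟩ : ∃ n : ℕ, ν A / 2 ^ n < ε := by
    have hfin : ν A ≠ ⊤ := measure_ne_top ν A
    by_cases hε' : ε = ⊤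
    · exact ⟨0, by simp [hε', hfin.lt_top]⟩
    · obtain ⟨n, hn⟩ := pow_unbounded_of_one_lt ((ν A).toReal / ε.toReal) (one_lt_two (α := ℝ))
      refine ⟨n, ?_⟩
      rw [ENNReal.div_lt_iff (Or.inl (by positivity)) (Or.inl (by simp))]
      rw [← ENNReal.toReal_lt_toReal hfin (ENNReal.mul_ne_top hε' (by simp))]
      have hε0 : (0:ℝ) < ε.toReal := ENNReal.toReal_pos hε.ne' hε'
      rw [ENNReal.toReal_mul, ENNReal.toReal_pow]
      calc (ν A).toReal = ((ν A).toReal / ε.toReal) * ε.toReal := by field_simp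
        _ < 2 ^ n * ε.toReal := by exact mul_lt_mul_of_pos_right hn hε0
        _ = ε.toReal * (ENNReal.toReal 2) ^ n := by norm_num [mul_comm]
  obtain ⟨B, hBA, hBm, hB0, hBle⟩ := key n
  exact ⟨B, hBA, hBm, hB0, lt_of_le_of_lt hBle hn⟩


/-- Sierpiński's theorem: a non-atomic finite measure attains every value up to `ν A`
on subsets of `A`. -/
lemma sierpinski {ν : Measure X} [IsFiniteMeasure ν] (hna : NA ν) {A : Set X}
    (hA : MeasurableSet A) {c : ℝ≥0∞} (hc : c ≤ ν A) :
    ∃ B ⊆ A, MeasurableSet B ∧ ν B = c := by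
  classical
  have hctop : c < ⊤ := lt_of_le_of_lt hc (measure_lt_top ν A)
  set Good : Set X → Prop := fun T => MeasurableSet T ∧ T ⊆ A ∧ ν T ≤ c with hGood
  set Cand : Set X → Set X → Prop :=
    fun T B => MeasurableSet B ∧ B ⊆ A \ T ∧ ν T + ν B ≤ c with hCand
  set δ : Set X → ℝ≥0∞ := fun T => ⨆ (B : Set X) (_ : Cand T B), ν B with hδ
  have hδ_le : ∀ T, δ T ≤ c := by
    intro T
    refine iSup_le fun B => iSup_le fun hB => ?_
    exact le_trans le_add_self hB.2.2
  have step : ∀ T, Good T → ∃ B, Cand T B ∧ δ T ≤ 2 * ν B := by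
    intro T hT
    by_cases h : δ T = 0
    · refine ⟨∅, ⟨MeasurableSet.empty, Set.empty_subset _, by simpa using hT.2.2⟩, by simp [h]⟩
    · have hhalf : δ T / 2 < δ T :=
        ENNReal.half_lt_self h (lt_of_le_of_lt (hδ_le T) hctop).ne
      rw [hδ] at hhalf
      simp only [lt_iSup_iff] at hhalf
      obtain ⟨B, hB, hBlt⟩ := hhalf
      refine ⟨B, hB, ?_⟩
      calc δ T = 2 * (δ T / 2) :=
            (ENNReal.mul_div_cancel' (by norm_num) (by norm_num)).symm
        _ ≤ 2 * ν B := mul_le_mul_right hBlt.le _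
  set pick : (T : Set X) → Good T → Set X := fun T hT => (step T hT).choose with hpick
  set next : Set X → Set X := fun T => if h : Good T then T ∪ pick T h else T with hnext
  set S : ℕ → Set X := fun n => next^[n] ∅ with hS
  have hS0 : S 0 = ∅ := rfl
  have hSsucc : ∀ n, S (n + 1) = next (S n) := fun n => Function.iterate_succ_apply' next n ∅
  have hGoodS : ∀ n, Good (S n) := by
    intro n
    induction n with
    | zero => exact ⟨MeasurableSet.empty, Set.empty_subset _, by rw [show S 0 = (∅ : Set X) from rfl, measure_empty]; exact zero_le⟩
    | succ n ih =>
      rw [hSsucc, hnext]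
      simp only [dif_pos ih]
      obtain ⟨hc1, hc2, hc3⟩ := (step (S n) ih).choose_spec.1
      refine ⟨ih.1.union hc1, Set.union_subset ih.2.1 (hc2.trans Set.diff_subset), ?_⟩
      rw [measure_union (Set.disjoint_of_subset_right hc2 disjoint_sdiff_right) hc1]
      exact hc3
  have hdisj : ∀ n, Disjoint (S n) (pick (S n) (hGoodS n)) := by
    intro n
    exact Set.disjoint_of_subset_right (step (S n) (hGoodS n)).choose_spec.1.2.1
      disjoint_sdiff_right
  have hSsucc' : ∀ n, S (n + 1) = S n ∪ pick (S n) (hGoodS n) := by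
    intro n; rw [hSsucc, hnext]; simp [dif_pos (hGoodS n)]
  have hmeasS : ∀ n, ν (S (n + 1)) = ν (S n) + ν (pick (S n) (hGoodS n)) := by
    intro n
    rw [hSsucc' n, measure_union (hdisj n) (step (S n) (hGoodS n)).choose_spec.1.1]
  have hmono : Monotone S := by
    refine monotone_nat_of_le_succ fun n => ?_
    rw [hSsucc' n]; exact Set.subset_union_left
  set Tinf : Set X := ⋃ n, S n with hTinf
  have hTinfm : MeasurableSet Tinf := MeasurableSet.iUnion fun n => (hGoodS n).1
  have hTinfA : Tinf ⊆ A := Set.iUnion_subset fun n => (hGoodS n).2.1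
  have hTinfν : ν Tinf = ⨆ n, ν (S n) := hmono.directed_le.measure_iUnion
  have hTinfle : ν Tinf ≤ c := by rw [hTinfν]; exact iSup_le fun n => (hGoodS n).2.2
  refine ⟨Tinf, hTinfA, hTinfm, ?_⟩
  by_contra hne
  have hlt : ν Tinf < c := lt_of_le_of_ne hTinfle hne
  have hAd : ν (A \ Tinf) ≠ 0 := by
    intro h0
    have : ν A ≤ ν Tinf :=
      le_trans (measure_mono (by intro x hx; by_cases hxT : x ∈ Tinf
                                 · exact Or.inl hxT
                                 · exact Or.inr ⟨hx, hxT⟩ : A ⊆ Tinf ∪ (A \ Tinf)))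
        (le_trans (measure_union_le _ _) (by rw [h0, add_zero]))
    exact absurd (lt_of_lt_of_le hlt (hc.trans this)) (lt_irrefl _)
  obtain ⟨B, hBsub, hBm, hB0, hBlt⟩ :=
    small hna (hA.diff hTinfm) hAd (ε := c - ν Tinf) (tsub_pos_of_lt hlt)
  have hCandB : ∀ n, Cand (S n) B := by
    intro n
    refine ⟨hBm, hBsub.trans (Set.diff_subset_diff_right (Set.subset_iUnion S n)), ?_⟩
    calc ν (S n) + ν B ≤ ν Tinf + (c - ν Tinf) :=
          add_le_add (measure_mono (Set.subset_iUnion S n)) hBlt.le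
      _ = c := add_tsub_cancel_of_le hlt.le
  have hδB : ∀ n, ν B ≤ δ (S n) := by
    intro n
    exact le_iSup_of_le B (le_iSup_of_le (hCandB n) le_rfl)
  have hpickB : ∀ n, ν B / 2 ≤ ν (pick (S n) (hGoodS n)) := by
    intro n
    have h2 : ν B ≤ 2 * ν (pick (S n) (hGoodS n)) :=
      le_trans (hδB n) (step (S n) (hGoodS n)).choose_spec.2
    rw [ENNReal.div_le_iff_le_mul (Or.inl (by norm_num)) (Or.inl (by norm_num))]
    rwa [mul_comm] at h2
  have hlower : ∀ n : ℕ, (n : ℝ≥0∞) * (ν B / 2) ≤ ν (S n) := by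
    intro n
    induction n with
    | zero => simp
    | succ n ih =>
      rw [hmeasS n]
      push_cast
      rw [add_mul, one_mul]
      exact add_le_add ih (hpickB n)
  obtain ⟨n, hn⟩ := ENNReal.exists_nat_mul_gt
    (a := ν B / 2) (by simp [hB0.ne', measure_ne_top ν B]) hctop.ne
  exact absurd (lt_of_lt_of_le (lt_of_lt_of_le hn (hlower n)) (hGoodS n).2.2) (lt_irrefl _)


/-- `s` is dominated by `ν` in the pointwise sense. -/
def Ctrl (ν : Measure X) (s : SignedMeasure X) : Prop :=
  ∀ E : Set X, MeasurableSet E → |s E| ≤ (ν E).toReal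

/-- Every measurable set can be halved simultaneously for `ν` and all members of `L`. -/
def Halves (ν : Measure X) (L : List (SignedMeasure X)) : Prop :=
  ∀ A : Set X, MeasurableSet A → ∃ B ⊆ A, MeasurableSet B ∧
    (ν B).toReal = (ν A).toReal / 2 ∧ ∀ s ∈ L, s B = s A / 2

/-- Every measurable set carries a monotone family realizing all fractions
simultaneously for `ν` and all members of `L`. -/
def Fam (ν : Measure X) (L : List (SignedMeasure X)) : Prop :=
  ∀ A : Set X, MeasurableSet A → ∃ D : ℝ → Set X, Monotone D ∧
    (∀ t, MeasurableSet (D t) ∧ D t ⊆ A) ∧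
    ∀ t ∈ Icc (0 : ℝ) 1,
      (ν (D t)).toReal = t * (ν A).toReal ∧ ∀ s ∈ L, s (D t) = t * s A

lemma fam_of_halves {ν : Measure X} [IsFiniteMeasure ν] {L : List (SignedMeasure X)}
    (hC : ∀ s ∈ L, Ctrl ν s) (hH : Halves ν L) : Fam ν L := by
  classical
  intro A hA
  choose! half hsub hmeas hνh hsh using hH
  -- `half` is a total function thanks to `choose!`; good properties hold on measurable sets.
  -- but `half E ⊆ E` may fail on non-measurable sets; replace:
  set H0 : Set X → Set X := fun E => if h : MeasurableSet E then half E else ∅ with hH0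
  have hH0sub : ∀ E, H0 E ⊆ E := by
    intro E; rw [hH0]; dsimp only
    split
    · exact hsub E ‹_›
    · exact Set.empty_subset _
  have hH0meas : ∀ E, MeasurableSet E → MeasurableSet (H0 E) := by
    intro E hE; rw [hH0]; dsimp only; rw [dif_pos hE]; exact hmeas E hE
  have hH0ν : ∀ E, MeasurableSet E → (ν (H0 E)).toReal = (ν E).toReal / 2 := by
    intro E hE; rw [hH0]; dsimp only; rw [dif_pos hE]; exact hνh E hE
  have hH0s : ∀ E, MeasurableSet E → ∀ s ∈ L, s (H0 E) = s E / 2 := by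
    intro E hE; rw [hH0]; dsimp only; rw [dif_pos hE]; exact hsh E hE
  -- dyadic pieces
  set P : ℕ → ℕ → Set X := fun k => Nat.rec (motive := fun _ => ℕ → Set X)
    (fun j => if j = 0 then A else ∅)
    (fun _ Pk j => if j % 2 = 0 then H0 (Pk (j / 2)) else Pk (j / 2) \ H0 (Pk (j / 2))) k
    with hP
  have hP0 : ∀ j, P 0 j = if j = 0 then A else ∅ := fun _ => rfl
  have hPs : ∀ k j, P (k + 1) j =
      if j % 2 = 0 then H0 (P k (j / 2)) else P k (j / 2) \ H0 (P k (j / 2)) := fun _ _ => rfl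
  have hPeven : ∀ k j, P (k + 1) (2 * j) = H0 (P k j) := by
    intro k j
    have h2 : 2 * j / 2 = j := by omega
    rw [hPs, if_pos (by omega : 2 * j % 2 = 0), h2]
  have hPodd : ∀ k j, P (k + 1) (2 * j + 1) = P k j \ H0 (P k j) := by
    intro k j
    have h2 : (2 * j + 1) / 2 = j := by omega
    rw [hPs, if_neg (by omega : ¬(2 * j + 1) % 2 = 0), h2]
  have hPsplit : ∀ k j, P k j = P (k + 1) (2 * j) ∪ P (k + 1) (2 * j + 1) := by
    intro k j
    rw [hPeven, hPodd, Set.union_diff_cancel' subset_rfl (hH0sub _)]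
  have hPmeas : ∀ k j, MeasurableSet (P k j) := by
    intro k
    induction k with
    | zero => intro j; rw [hP0]; split <;> [exact hA; exact MeasurableSet.empty]
    | succ k ih =>
      intro j; rw [hPs]; split
      · exact hH0meas _ (ih _)
      · exact (ih _).diff (hH0meas _ (ih _))
  have hPsubA : ∀ k j, P k j ⊆ A := by
    intro k
    induction k with
    | zero => intro j; rw [hP0]; split <;> [exact subset_rfl; exact Set.empty_subset _]
    | succ k ih =>
      intro j; rw [hPs]; split
      · exact (hH0sub _).trans (ih _)
      · exact Set.diff_subset.trans (ih _)
  have hPempty : ∀ k j, 2 ^ k ≤ j → P k j = ∅ := by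
    intro k
    induction k with
    | zero => intro j hj; rw [hP0, if_neg]; omega
    | succ k ih =>
      intro j hj
      have hpar : P k (j / 2) = ∅ := ih _ (by omega)
      have hH0e : H0 (∅ : Set X) = ∅ := Set.subset_empty_iff.mp (hH0sub ∅)
      rw [hPs, hpar, hH0e]; split <;> simp
  have hPν : ∀ k j, j < 2 ^ k → (ν (P k j)).toReal = (ν A).toReal / 2 ^ k := by
    intro k
    induction k with
    | zero => intro j hj; interval_cases j; rw [hP0]; simp
    | succ k ih =>
      intro j hj
      have hjd : j / 2 < 2 ^ k := by omega
      have hpar := ih _ hjd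
      have hmp := hPmeas k (j / 2)
      have hhalfν := hH0ν _ hmp
      rw [hPs]; split
      · rw [hhalfν, hpar, pow_succ]; ring
      · have hd : ν (P k (j / 2) \ H0 (P k (j / 2))) = ν (P k (j / 2)) - ν (H0 (P k (j / 2))) :=
          measure_diff (hH0sub _) (hH0meas _ hmp).nullMeasurableSet (measure_ne_top ν _)
        rw [hd, ENNReal.toReal_sub_of_le (measure_mono (hH0sub _)) (measure_ne_top ν _),
          hhalfν, hpar, pow_succ]
        ring
  have hPsm : ∀ s ∈ L, ∀ k j, j < 2 ^ k → s (P k j) = s A / 2 ^ k := by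
    intro s hs k
    induction k with
    | zero => intro j hj; interval_cases j; rw [hP0]; simp
    | succ k ih =>
      intro j hj
      have hjd : j / 2 < 2 ^ k := by omega
      have hpar := ih _ hjd
      have hmp := hPmeas k (j / 2)
      have hhalfs := hH0s _ hmp s hs
      rw [hPs]; split
      · rw [hhalfs, hpar, pow_succ]; ring
      · rw [VectorMeasure.of_diff (hH0meas _ hmp) hmp (hH0sub _), hhalfs, hpar, pow_succ]
        ring
  have hPdisj : ∀ k j j', j ≠ j' → Disjoint (P k j) (P k j') := by
    intro k
    induction k with
    | zero =>
      intro j j' hne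
      rcases Nat.eq_zero_or_pos j with rfl | hj
      · rw [hP0 j', if_neg (by omega)]; exact disjoint_bot_right
      · rw [hP0 j, if_neg (by omega)]; exact disjoint_bot_left
    | succ k ih =>
      intro j j' hne
      by_cases hpar : j / 2 = j' / 2
      · have hsub1 : P (k + 1) j ⊆ P k (j / 2) := by
          rw [hPs]; split
          · exact hH0sub _
          · exact Set.diff_subset
        have hex : ∃ m, (j = 2 * m ∧ j' = 2 * m + 1) ∨ (j = 2 * m + 1 ∧ j' = 2 * m) :=
          ⟨j / 2, by omega⟩
        obtain ⟨m, hm⟩ := hex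
        rcases hm with ⟨h1, h2⟩ | ⟨h1, h2⟩ <;> subst h1 <;> subst h2
        · rw [hPeven, hPodd]; exact disjoint_sdiff_right
        · rw [hPeven, hPodd]; exact disjoint_sdiff_left
      · have hsub1 : P (k + 1) j ⊆ P k (j / 2) := by
          rw [hPs]; split
          · exact hH0sub _
          · exact Set.diff_subset
        have hsub2 : P (k + 1) j' ⊆ P k (j' / 2) := by
          rw [hPs]; split
          · exact hH0sub _
          · exact Set.diff_subset
        exact (ih _ _ hpar).mono hsub1 hsub2
  -- partial unions of dyadic pieces
  set Q : ℕ → ℕ → Set X := fun k => Nat.rec (motive := fun _ => Set X) ∅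
    (fun j Qkj => Qkj ∪ P k j) with hQ
  have hQ0 : ∀ k, Q k 0 = ∅ := fun _ => rfl
  have hQs : ∀ k j, Q k (j + 1) = Q k j ∪ P k j := fun _ _ => rfl
  have hQmeas : ∀ k j, MeasurableSet (Q k j) := by
    intro k j
    induction j with
    | zero => exact MeasurableSet.empty
    | succ j ih => rw [hQs]; exact ih.union (hPmeas k j)
  have hQsubA : ∀ k j, Q k j ⊆ A := by
    intro k j
    induction j with
    | zero => rw [hQ0]; exact Set.empty_subset _
    | succ j ih => rw [hQs]; exact Set.union_subset ih (hPsubA k j)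
  have hQdisj : ∀ k j i, j ≤ i → Disjoint (Q k j) (P k i) := by
    intro k j
    induction j with
    | zero => intro i _; rw [hQ0]; exact disjoint_bot_left
    | succ j ih =>
      intro i hi
      rw [hQs]
      exact Disjoint.union_left (ih i (by omega)) (hPdisj k j i (by omega))
  have hQν : ∀ k j, j ≤ 2 ^ k → (ν (Q k j)).toReal = j * ((ν A).toReal / 2 ^ k) := by
    intro k j
    induction j with
    | zero => intro _; rw [hQ0]; simp
    | succ j ih =>
      intro hj
      rw [hQs, measure_union (hQdisj k j j le_rfl) (hPmeas k j),
        ENNReal.toReal_add (measure_ne_top ν _) (measure_ne_top ν _),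
        ih (by omega), hPν k j (by omega)]
      push_cast; ring
  have hQsm : ∀ s ∈ L, ∀ k j, j ≤ 2 ^ k → s (Q k j) = j * (s A / 2 ^ k) := by
    intro s hs k j
    induction j with
    | zero => intro _; rw [hQ0]; simp
    | succ j ih =>
      intro hj
      rw [hQs, VectorMeasure.of_union (hQdisj k j j le_rfl) (hQmeas k j) (hPmeas k j),
        ih (by omega), hPsm s hs k j (by omega)]
      push_cast; ring
  have hQmono : ∀ k i j, i ≤ j → Q k i ⊆ Q k j := by
    intro k i j hij
    induction j with
    | zero => have : i = 0 := by omega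
              subst this; exact subset_rfl
    | succ j ih =>
      rcases Nat.lt_or_ge i (j + 1) with h | h
      · rw [hQs]; exact (ih (by omega)).trans Set.subset_union_left
      · have : i = j + 1 := by omega
        subst this; exact subset_rfl
  have hQref : ∀ k j, Q (k + 1) (2 * j) = Q k j := by
    intro k j
    induction j with
    | zero => rfl
    | succ j ih =>
      have h2 : 2 * (j + 1) = (2 * j + 1) + 1 := by ring
      rw [h2, hQs (k + 1) (2 * j + 1), hQs (k + 1) (2 * j), ih, hQs k j,
        hPeven, hPodd, Set.union_assoc, Set.union_diff_cancel' subset_rfl (hH0sub _)]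
  -- the monotone family
  set cl : ℝ → ℝ := fun t => max 0 (min t 1) with hcl
  have hcl01 : ∀ t, cl t ∈ Icc (0 : ℝ) 1 := by
    intro t
    constructor
    · exact le_max_left _ _
    · rw [hcl]; dsimp only; rw [max_le_iff]
      exact ⟨zero_le_one, min_le_right _ _⟩
  have hclmono : Monotone cl := fun a b hab =>
    max_le_max le_rfl (min_le_min hab le_rfl)
  have hclid : ∀ t ∈ Icc (0 : ℝ) 1, cl t = t := by
    intro t ht
    rw [hcl]; dsimp only
    rw [min_eq_left ht.2, max_eq_right ht.1]
  set jk : ℝ → ℕ → ℕ := fun t k => ⌊cl t * 2 ^ k⌋₊ with hjk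
  have hjk_le : ∀ t k, jk t k ≤ 2 ^ k := by
    intro t k
    rw [hjk]; dsimp only
    calc ⌊cl t * 2 ^ k⌋₊ ≤ ⌊((2 ^ k : ℕ) : ℝ)⌋₊ := by
          refine Nat.floor_le_floor ?_
          push_cast
          exact mul_le_of_le_one_left (by positivity) (hcl01 t).2
      _ = 2 ^ k := Nat.floor_natCast _
  have hjk_mono : ∀ k, Monotone (fun t => jk t k) := by
    intro k a b hab
    exact Nat.floor_le_floor (mul_le_mul_of_nonneg_right (hclmono hab) (by positivity))
  have hchain : ∀ t k, Q k (jk t k) ⊆ Q (k + 1) (jk t (k + 1)) := by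
    intro t k
    have harg : 2 * jk t k ≤ jk t (k + 1) := by
      rw [hjk]; dsimp only
      refine Nat.le_floor ?_
      have h1 : (⌊cl t * 2 ^ k⌋₊ : ℝ) ≤ cl t * 2 ^ k :=
        Nat.floor_le (by positivity : (0:ℝ) ≤ cl t * 2 ^ k)
      calc ((2 * ⌊cl t * 2 ^ k⌋₊ : ℕ) : ℝ) = 2 * (⌊cl t * 2 ^ k⌋₊ : ℝ) := by push_cast; ring
        _ ≤ 2 * (cl t * 2 ^ k) := by linarith
        _ = cl t * 2 ^ (k + 1) := by ring
    rw [← hQref k (jk t k)]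
    exact hQmono (k + 1) _ _ harg
  set D : ℝ → Set X := fun t => ⋃ k, Q k (jk t k) with hD
  have hDmeas : ∀ t, MeasurableSet (D t) := fun t => MeasurableSet.iUnion fun k => hQmeas _ _
  have hDsubA : ∀ t, D t ⊆ A := fun t => Set.iUnion_subset fun k => hQsubA _ _
  have hDmono : Monotone D := by
    intro a b hab
    refine Set.iUnion_subset fun k => ?_
    exact (hQmono k _ _ (hjk_mono k hab)).trans (Set.subset_iUnion (fun k => Q k (jk b k)) k)
  have hDchain : ∀ t, Monotone (fun k => Q k (jk t k)) := fun t =>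
    monotone_nat_of_le_succ (hchain t)
  have hratio : ∀ t, Filter.Tendsto (fun k : ℕ => (jk t k : ℝ) / 2 ^ k)
      Filter.atTop (nhds (cl t)) := by
    intro t
    have hup : ∀ k : ℕ, (jk t k : ℝ) / 2 ^ k ≤ cl t := by
      intro k
      rw [div_le_iff₀ (by positivity)]
      exact Nat.floor_le (by positivity)
    have hlo : ∀ k : ℕ, cl t - (1 / 2) ^ k ≤ (jk t k : ℝ) / 2 ^ k := by
      intro k
      rw [sub_le_iff_le_add, div_add' _ _ _ (by positivity : ((2:ℝ) ^ k) ≠ 0),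
        le_div_iff₀ (by positivity)]
      have := Nat.lt_floor_add_one (cl t * 2 ^ k)
      have h2 : (1 / 2 : ℝ) ^ k * 2 ^ k = 1 := by
        rw [← mul_pow]; norm_num
      nlinarith [this]
    have h1 : Filter.Tendsto (fun k : ℕ => cl t - (1 / 2 : ℝ) ^ k)
        Filter.atTop (nhds (cl t)) := by
      have := tendsto_pow_atTop_nhds_zero_of_lt_one
        (by norm_num : (0:ℝ) ≤ 1 / 2) (by norm_num : (1/2 : ℝ) < 1)
      simpa using Filter.Tendsto.const_sub (cl t) this
    exact tendsto_of_tendsto_of_tendsto_of_le_of_le h1 tendsto_const_nhds hlo hup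
  have hDν : ∀ t, (ν (D t)).toReal = cl t * (ν A).toReal := by
    intro t
    have hlim : Filter.Tendsto (fun k => ν (Q k (jk t k))) Filter.atTop (nhds (ν (D t))) :=
      tendsto_measure_iUnion_atTop (hDchain t)
    have hlimR : Filter.Tendsto (fun k => (ν (Q k (jk t k))).toReal) Filter.atTop
        (nhds ((ν (D t)).toReal)) :=
      (ENNReal.tendsto_toReal (measure_ne_top ν _)).comp hlim
    have heq : ∀ k, (ν (Q k (jk t k))).toReal = (jk t k : ℝ) / 2 ^ k * (ν A).toReal := by
      intro k
      rw [hQν k _ (hjk_le t k)]; ring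
    rw [funext heq] at hlimR
    exact tendsto_nhds_unique hlimR ((hratio t).mul_const _)
  have hDs : ∀ s ∈ L, ∀ t, s (D t) = cl t * s A := by
    intro s hs t
    have hQsub : ∀ k, Q k (jk t k) ⊆ D t := fun k =>
      Set.subset_iUnion (fun k => Q k (jk t k)) k
    have hbound : ∀ k, |s (D t) - s (Q k (jk t k))| ≤
        (ν (D t)).toReal - (ν (Q k (jk t k))).toReal := by
      intro k
      have hdiff : s (D t \ Q k (jk t k)) = s (D t) - s (Q k (jk t k)) :=
        VectorMeasure.of_diff (hQmeas _ _) (hDmeas t) (hQsub k)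
      rw [← hdiff]
      calc |s (D t \ Q k (jk t k))| ≤ (ν (D t \ Q k (jk t k))).toReal :=
            hC s hs _ ((hDmeas t).diff (hQmeas _ _))
        _ = (ν (D t)).toReal - (ν (Q k (jk t k))).toReal := by
            rw [measure_diff (hQsub k) (hQmeas _ _).nullMeasurableSet (measure_ne_top ν _),
              ENNReal.toReal_sub_of_le (measure_mono (hQsub k)) (measure_ne_top ν _)]
    have hlim : Filter.Tendsto (fun k => ν (Q k (jk t k))) Filter.atTop (nhds (ν (D t))) :=
      tendsto_measure_iUnion_atTop (hDchain t)
    have hlimR : Filter.Tendsto (fun k => (ν (Q k (jk t k))).toReal) Filter.atTop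
        (nhds ((ν (D t)).toReal)) :=
      (ENNReal.tendsto_toReal (measure_ne_top ν _)).comp hlim
    have hgap : Filter.Tendsto (fun k => (ν (D t)).toReal - (ν (Q k (jk t k))).toReal)
        Filter.atTop (nhds 0) := by
      simpa using Filter.Tendsto.const_sub ((ν (D t)).toReal) hlimR
    have habs : Filter.Tendsto (fun k => |s (D t) - s (Q k (jk t k))|)
        Filter.atTop (nhds 0) :=
      squeeze_zero (fun k => abs_nonneg _) hbound hgap
    have hsub0 : Filter.Tendsto (fun k => s (D t) - s (Q k (jk t k)))
        Filter.atTop (nhds 0) := by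
      refine squeeze_zero_norm (fun k => ?_) hgap
      simpa using hbound k
    have hsq : Filter.Tendsto (fun k => s (Q k (jk t k))) Filter.atTop (nhds (s (D t))) := by
      have := (tendsto_const_nhds (x := s (D t)) (f := Filter.atTop (α := ℕ))).sub hsub0
      simpa using this
    have heq : ∀ k, s (Q k (jk t k)) = (jk t k : ℝ) / 2 ^ k * s A := by
      intro k
      rw [hQsm s hs k _ (hjk_le t k)]; ring
    rw [funext heq] at hsq
    exact tendsto_nhds_unique hsq ((hratio t).mul_const _)
  refine ⟨D, hDmono, fun t => ⟨hDmeas t, hDsubA t⟩, fun t ht => ?_⟩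
  rw [hDν t, hclid t ht]
  exact ⟨rfl, fun s hs => by rw [hDs s hs t, hclid t ht]⟩


lemma halves_nil {ν : Measure X} [IsFiniteMeasure ν] (hna : NA ν) : Halves ν [] := by
  intro A hA
  obtain ⟨B, hBA, hBm, hBν⟩ := sierpinski hna hA (ENNReal.half_le_self : ν A / 2 ≤ ν A)
  refine ⟨B, hBA, hBm, ?_, by simp⟩
  rw [hBν, ENNReal.toReal_div]
  norm_num

lemma halves_cons {ν : Measure X} [IsFiniteMeasure ν] {h : SignedMeasure X}
    {L : List (SignedMeasure X)} (hc : Ctrl ν h) (hF : Fam ν L) :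
    Halves ν (h :: L) := by
  intro A hA
  obtain ⟨D, hDmono, hDgood, hDval⟩ := hF A hA
  set B := D (1 / 2) with hBdef
  have hBm : MeasurableSet B := (hDgood _).1
  have hBA : B ⊆ A := (hDgood _).2
  have h12 : (1 / 2 : ℝ) ∈ Icc (0 : ℝ) 1 := by constructor <;> norm_num
  have hBν : (ν B).toReal = (ν A).toReal / 2 := by
    rw [(hDval _ h12).1]; ring
  have hBs : ∀ s ∈ L, s B = s A / 2 := by
    intro s hs
    rw [(hDval _ h12).2 s hs]; ring
  set C := A \ B with hCdef
  have hCm : MeasurableSet C := hA.diff hBm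
  have hCA : C ⊆ A := Set.diff_subset
  have hCν : (ν C).toReal = (ν A).toReal / 2 := by
    rw [hCdef, measure_diff hBA hBm.nullMeasurableSet (measure_ne_top ν _),
      ENNReal.toReal_sub_of_le (measure_mono hBA) (measure_ne_top ν _), hBν]
    ring
  have hCs : ∀ s ∈ L, s C = s A / 2 := by
    intro s hs
    rw [hCdef, VectorMeasure.of_diff hBm hA hBA, hBs s hs]; ring
  have hdisjBC : Disjoint B C := disjoint_sdiff_right
  have hhBC : h B + h C = h A := by
    rw [hCdef, VectorMeasure.of_diff hBm hA hBA]; ring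
  obtain ⟨F, hFmono, hFgood, hFval⟩ := hF B hBm
  obtain ⟨G, hGmono, hGgood, hGval⟩ := hF C hCm
  set S : ℝ → Set X := fun t => F t ∪ (C \ G t) with hSdef
  have hSm : ∀ t, MeasurableSet (S t) := fun t =>
    ((hFgood t).1).union (hCm.diff (hGgood t).1)
  have hSA : ∀ t, S t ⊆ A :=
    fun t => Set.union_subset ((hFgood t).2.trans hBA) (Set.diff_subset.trans hCA)
  have hSdisj : ∀ t, Disjoint (F t) (C \ G t) := fun t =>
    (hdisjBC.mono (hFgood t).2 Set.diff_subset)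
  have hSh : ∀ t, h (S t) = h (F t) + (h C - h (G t)) := by
    intro t
    rw [hSdef]; dsimp only
    rw [VectorMeasure.of_union (hSdisj t) (hFgood t).1 (hCm.diff (hGgood t).1),
      VectorMeasure.of_diff (hGgood t).1 hCm (hGgood t).2]
  -- ν and L-values of S t are constantly half, for t ∈ [0,1]
  have hSν : ∀ t ∈ Icc (0 : ℝ) 1, (ν (S t)).toReal = (ν A).toReal / 2 := by
    intro t ht
    rw [hSdef]; dsimp only
    rw [measure_union (hSdisj t) (hCm.diff (hGgood t).1),
      ENNReal.toReal_add (measure_ne_top ν _) (measure_ne_top ν _),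
      measure_diff (hGgood t).2 (hGgood t).1.nullMeasurableSet (measure_ne_top ν _),
      ENNReal.toReal_sub_of_le (measure_mono (hGgood t).2) (measure_ne_top ν _),
      (hFval t ht).1, (hGval t ht).1, hBν, hCν]
    ring
  have hSs : ∀ s ∈ L, ∀ t ∈ Icc (0 : ℝ) 1, s (S t) = s A / 2 := by
    intro s hs t ht
    rw [hSdef]; dsimp only
    rw [VectorMeasure.of_union (hSdisj t) (hFgood t).1 (hCm.diff (hGgood t).1),
      VectorMeasure.of_diff (hGgood t).1 hCm (hGgood t).2,
      (hFval t ht).2 s hs, (hGval t ht).2 s hs, hBs s hs, hCs s hs]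
    ring
  -- endpoints of φ t = h (S t)
  have hzero : ∀ (E : Set X), MeasurableSet E → (ν E).toReal = 0 → h E = 0 := by
    intro E hEm hE0
    have := hc E hEm
    rw [hE0] at this
    exact abs_eq_zero.mp (le_antisymm this (abs_nonneg _))
  have hF0 : h (F 0) = 0 :=
    hzero _ (hFgood 0).1 (by rw [(hFval 0 ⟨le_rfl, zero_le_one⟩).1]; ring)
  have hG0 : h (G 0) = 0 :=
    hzero _ (hGgood 0).1 (by rw [(hGval 0 ⟨le_rfl, zero_le_one⟩).1]; ring)
  have hF1 : h (F 1) = h B := by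
    have hd : h (B \ F 1) = h B - h (F 1) :=
      VectorMeasure.of_diff (hFgood 1).1 hBm (hFgood 1).2
    have h0 : h (B \ F 1) = 0 := by
      refine hzero _ (hBm.diff (hFgood 1).1) ?_
      rw [measure_diff (hFgood 1).2 (hFgood 1).1.nullMeasurableSet (measure_ne_top ν _),
        ENNReal.toReal_sub_of_le (measure_mono (hFgood 1).2) (measure_ne_top ν _),
        (hFval 1 ⟨zero_le_one, le_rfl⟩).1]
      ring
    rw [h0] at hd; linarith
  have hG1 : h (G 1) = h C := by
    have hd : h (C \ G 1) = h C - h (G 1) :=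
      VectorMeasure.of_diff (hGgood 1).1 hCm (hGgood 1).2
    have h0 : h (C \ G 1) = 0 := by
      refine hzero _ (hCm.diff (hGgood 1).1) ?_
      rw [measure_diff (hGgood 1).2 (hGgood 1).1.nullMeasurableSet (measure_ne_top ν _),
        ENNReal.toReal_sub_of_le (measure_mono (hGgood 1).2) (measure_ne_top ν _),
        (hGval 1 ⟨zero_le_one, le_rfl⟩).1]
      ring
    rw [h0] at hd; linarith
  set φ : ℝ → ℝ := fun t => h (S t) with hφ
  have hφ0 : φ 0 = h C := by rw [hφ]; dsimp only; rw [hSh 0, hF0, hG0]; ring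
  have hφ1 : φ 1 = h B := by rw [hφ]; dsimp only; rw [hSh 1, hF1, hG1]; ring
  -- Lipschitz continuity of φ on [0,1]
  have hlip : ∀ t ∈ Icc (0 : ℝ) 1, ∀ u ∈ Icc (0 : ℝ) 1, t ≤ u →
      |φ u - φ t| ≤ (u - t) * (ν A).toReal := by
    intro t ht u hu htu
    have hFd : h (F u) - h (F t) = h (F u \ F t) :=
      (VectorMeasure.of_diff (hFgood t).1 (hFgood u).1 (hFmono htu)).symm
    have hGd : h (G u) - h (G t) = h (G u \ G t) :=
      (VectorMeasure.of_diff (hGgood t).1 (hGgood u).1 (hGmono htu)).symm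
    have hFν : (ν (F u \ F t)).toReal = (u - t) * (ν B).toReal := by
      rw [measure_diff (hFmono htu) (hFgood t).1.nullMeasurableSet (measure_ne_top ν _),
        ENNReal.toReal_sub_of_le (measure_mono (hFmono htu)) (measure_ne_top ν _),
        (hFval u hu).1, (hFval t ht).1]
      ring
    have hGν : (ν (G u \ G t)).toReal = (u - t) * (ν C).toReal := by
      rw [measure_diff (hGmono htu) (hGgood t).1.nullMeasurableSet (measure_ne_top ν _),
        ENNReal.toReal_sub_of_le (measure_mono (hGmono htu)) (measure_ne_top ν _),
        (hGval u hu).1, (hGval t ht).1]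
      ring
    have hFb : |h (F u) - h (F t)| ≤ (u - t) * (ν B).toReal := by
      rw [hFd, ← hFν]
      exact hc _ ((hFgood u).1.diff (hFgood t).1)
    have hGb : |h (G u) - h (G t)| ≤ (u - t) * (ν C).toReal := by
      rw [hGd, ← hGν]
      exact hc _ ((hGgood u).1.diff (hGgood t).1)
    have hφd : φ u - φ t = (h (F u) - h (F t)) - (h (G u) - h (G t)) := by
      rw [hφ]; dsimp only; rw [hSh u, hSh t]; ring
    calc |φ u - φ t| ≤ |h (F u) - h (F t)| + |h (G u) - h (G t)| := by
          rw [hφd]; exact abs_sub _ _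
      _ ≤ (u - t) * (ν B).toReal + (u - t) * (ν C).toReal := add_le_add hFb hGb
      _ = (u - t) * (ν A).toReal := by rw [hBν, hCν]; ring
  have hcont : ContinuousOn φ (Icc (0 : ℝ) 1) := by
    refine (LipschitzOnWith.continuousOn
      (K := Real.toNNReal ((ν A).toReal)) ?_)
    refine LipschitzOnWith.of_dist_le_mul fun t ht u hu => ?_
    rcases le_total t u with htu | htu
    · rw [Real.dist_eq, Real.dist_eq, abs_sub_comm,
        abs_of_nonpos (by linarith : t - u ≤ 0)]
      calc |φ u - φ t| ≤ (u - t) * (ν A).toReal := hlip t ht u hu htu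
        _ = Real.toNNReal ((ν A).toReal) * (-(t - u)) := by
            rw [Real.coe_toNNReal _ ENNReal.toReal_nonneg]; ring
    · rw [Real.dist_eq, Real.dist_eq, abs_of_nonneg (by linarith : 0 ≤ t - u)]
      calc |φ t - φ u| ≤ (t - u) * (ν A).toReal := hlip u hu t ht htu
        _ = Real.toNNReal ((ν A).toReal) * (t - u) := by
            rw [Real.coe_toNNReal _ ENNReal.toReal_nonneg]; ring
  -- the average is between the endpoints
  have hmem : h A / 2 ∈ uIcc (φ 0) (φ 1) := by
    rw [hφ0, hφ1, Set.mem_uIcc]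
    rcases le_total (h C) (h B) with hcb | hcb
    · left; constructor <;> linarith
    · right; constructor <;> linarith
  have hIVT := intermediate_value_uIcc (a := (0:ℝ)) (b := 1) (by
    rwa [Set.uIcc_of_le (zero_le_one : (0:ℝ) ≤ 1)])
  obtain ⟨t, ht, hφt⟩ := hIVT hmem
  rw [Set.uIcc_of_le (zero_le_one : (0:ℝ) ≤ 1)] at ht
  refine ⟨S t, hSA t, hSm t, hSν t ht, ?_⟩
  intro s hs
  rcases List.mem_cons.mp hs with rfl | hs
  · exact hφt
  · exact hSs s hs t ht


lemma fam_all {ν : Measure X} [IsFiniteMeasure ν] (hna : NA ν) :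
    ∀ L : List (SignedMeasure X), (∀ s ∈ L, Ctrl ν s) → Fam ν L := by
  intro L
  induction L with
  | nil => exact fun _ => fam_of_halves (by simp) (halves_nil hna)
  | cons h tl ih =>
    intro hC
    have hFtl : Fam ν tl := ih fun s hs => hC s (List.mem_cons_of_mem _ hs)
    exact fam_of_halves hC (halves_cons (hC h List.mem_cons_self) hFtl)

/-- A signed measure is dominated by its total variation. -/
lemma abs_le_totalVariation (s : SignedMeasure X) {E : Set X} (hE : MeasurableSet E) :
    |s E| ≤ (s.totalVariation E).toReal := by
  obtain ⟨i, hi₁, hi₂, hi₃, hpos, hneg⟩ := s.toJordanDecomposition_spec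
  have hpE : (s.toJordanDecomposition.posPart E).toReal = s (i ∩ E) := by
    rw [hpos, SignedMeasure.toMeasureOfZeroLE_apply _ hi₂ hi₁ hE]
    simp
  have hnE : (s.toJordanDecomposition.negPart E).toReal = -s (iᶜ ∩ E) := by
    rw [hneg, SignedMeasure.toMeasureOfLEZero_apply _ hi₃ hi₁.compl hE]
    simp
  have hsE : s E = s (i ∩ E) + s (iᶜ ∩ E) := by
    have hcup : (i ∩ E) ∪ (iᶜ ∩ E) = E := by
      rw [Set.inter_comm, Set.inter_comm iᶜ, Set.inter_union_compl]
    have hdisj : Disjoint (i ∩ E) (iᶜ ∩ E) :=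
      Set.disjoint_of_subset Set.inter_subset_left Set.inter_subset_left
        (disjoint_compl_right : Disjoint i iᶜ)
    have := VectorMeasure.of_union (v := s) hdisj (hi₁.inter hE) (hi₁.compl.inter hE)
    rw [hcup] at this
    exact this
  have htv : (s.totalVariation E).toReal =
      (s.toJordanDecomposition.posPart E).toReal +
      (s.toJordanDecomposition.negPart E).toReal := by
    haveI := s.toJordanDecomposition.posPart_finite
    haveI := s.toJordanDecomposition.negPart_finite
    rw [SignedMeasure.totalVariation, Measure.coe_add, Pi.add_apply,
      ENNReal.toReal_add (measure_ne_top _ _) (measure_ne_top _ _)]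
  have h1 : 0 ≤ (s.toJordanDecomposition.posPart E).toReal := ENNReal.toReal_nonneg
  have h2 : 0 ≤ (s.toJordanDecomposition.negPart E).toReal := ENNReal.toReal_nonneg
  rw [htv, hpE, hnE] at *
  rw [hsE]
  rw [abs_le]
  constructor <;> linarith [h1, h2, hpE ▸ h1, hnE ▸ h2]

/-- If the total variation of `s` is nonzero on `A`, some measurable subset of `A`
has nonzero `s`-measure. -/
lemma exists_ne_zero_of_totalVariation (s : SignedMeasure X) {A : Set X}
    (hA : MeasurableSet A) (h : s.totalVariation A ≠ 0) :
    ∃ B ⊆ A, MeasurableSet B ∧ s B ≠ 0 := by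
  obtain ⟨i, hi₁, hi₂, hi₃, hpos, hneg⟩ := s.toJordanDecomposition_spec
  rw [SignedMeasure.totalVariation, Measure.coe_add, Pi.add_apply] at h
  rcases (by
    by_contra hcon
    push_neg at hcon
    exact h (by rw [hcon.1, hcon.2, add_zero]) :
    s.toJordanDecomposition.posPart A ≠ 0 ∨ s.toJordanDecomposition.negPart A ≠ 0) with hp | hn
  · refine ⟨i ∩ A, Set.inter_subset_right, hi₁.inter hA, ?_⟩
    intro h0
    apply hp
    rw [hpos, SignedMeasure.toMeasureOfZeroLE_apply _ hi₂ hi₁ hA]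
    simp [h0]
  · refine ⟨iᶜ ∩ A, Set.inter_subset_right, hi₁.compl.inter hA, ?_⟩
    intro h0
    apply hn
    rw [hneg, SignedMeasure.toMeasureOfLEZero_apply _ hi₃ hi₁.compl hA]
    simp [h0]


end Lyap

/-- Lyapunov convexity instance: for a non-atomic finite-dimensional vector measure `μ`,
for every `β ∈ [0,1]` there is a measurable set `V_β` with `μ(V_β) = β·μ(univ)`,
and its complement satisfies `μ(V_βᶜ) = (1−β)·μ(univ)`. -/
theorem lyapunov_fraction_set {X : Type*} [MeasurableSpace X] {d : ℕ}
    (μ : VectorMeasure X (EuclideanSpace ℝ (Fin d)))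
    (hna : ∀ A : Set X, MeasurableSet A → μ A ≠ 0 →
      ∃ B ⊆ A, MeasurableSet B ∧ μ B ≠ 0 ∧ μ B ≠ μ A) :
    ∀ β : ℝ, β ∈ Set.Icc (0 : ℝ) 1 →
      ∃ V : Set X, MeasurableSet V ∧ μ V = β • μ Set.univ ∧
        μ Vᶜ = (1 - β) • μ Set.univ := by
  classical
  intro β hβ
  set sm : Fin d → SignedMeasure X := fun i =>
    μ.mapRange (EuclideanSpace.proj (𝕜 := ℝ) i).toLinearMap.toAddMonoidHom
      (EuclideanSpace.proj (𝕜 := ℝ) i).continuous with hsm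
  have hsm_apply : ∀ i (E : Set X), sm i E = μ E i := fun i E => rfl
  have hfin_i : ∀ i, IsFiniteMeasure ((sm i).totalVariation) := by
    intro i
    haveI := (sm i).toJordanDecomposition.posPart_finite
    haveI := (sm i).toJordanDecomposition.negPart_finite
    unfold SignedMeasure.totalVariation
    infer_instance
  haveI := hfin_i
  set ν : Measure X := ∑ i : Fin d, (sm i).totalVariation with hν
  have hν_apply : ∀ E : Set X, ν E = ∑ i, (sm i).totalVariation E := fun E => by
    rw [hν, Measure.finset_sum_apply]
  haveI hνfin : IsFiniteMeasure ν := by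
    constructor
    rw [hν_apply]
    exact ENNReal.sum_lt_top.mpr fun i _ => measure_lt_top _ _
  have hCtrl : ∀ i, Lyap.Ctrl ν (sm i) := by
    intro i E hE
    refine (Lyap.abs_le_totalVariation (sm i) hE).trans ?_
    refine ENNReal.toReal_mono (measure_ne_top ν E) ?_
    rw [hν_apply]
    exact Finset.single_le_sum (f := fun j => (sm j).totalVariation E)
      (fun j _ => zero_le) (Finset.mem_univ i)
  have hzero : ∀ E : Set X, MeasurableSet E → ν E = 0 → μ E = 0 := by
    intro E hE h0
    have hall : ∀ i, sm i E = 0 := by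
      intro i
      have := hCtrl i E hE
      rw [h0] at this
      have h1 : |sm i E| ≤ 0 := by simpa using this
      exact abs_eq_zero.mp (le_antisymm h1 (abs_nonneg _))
    refine PiLp.ext fun i => ?_
    have := hall i
    rw [hsm_apply] at this
    exact this
  have hdiffν : ∀ {A B : Set X}, MeasurableSet A → MeasurableSet B → B ⊆ A →
      ν B = ν A → ν (A \ B) = 0 := by
    intro A B hA hB hBA heq
    rw [measure_diff hBA hB.nullMeasurableSet (measure_ne_top ν _), heq, tsub_self]
  have hμdiff : ∀ {A B : Set X}, MeasurableSet A → MeasurableSet B → B ⊆ A →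
      ν B = ν A → μ B = μ A := by
    intro A B hA hB hBA heq
    have h0 : μ (A \ B) = 0 := hzero _ (hA.diff hB) (hdiffν hA hB hBA heq)
    have := VectorMeasure.of_diff (v := μ) hB hA hBA
    rw [h0] at this
    exact (sub_eq_zero.mp this.symm).symm
  have hNA : Lyap.NA ν := by
    intro A hA h0
    by_cases hμA : μ A = 0
    · -- find a subset with nonzero μ first
      have hex : ∃ i, (sm i).totalVariation A ≠ 0 := by
        by_contra hcon
        push_neg at hcon
        exact h0 (by rw [hν_apply]; exact Finset.sum_eq_zero fun i _ => hcon i)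
      obtain ⟨i, hi⟩ := hex
      obtain ⟨C, hCA, hCm, hC0⟩ := Lyap.exists_ne_zero_of_totalVariation (sm i) hA hi
      have hμC : μ C ≠ 0 := by
        intro hc
        apply hC0
        rw [hsm_apply, hc]
        rfl
      obtain ⟨B, hBC, hBm, hB0, _⟩ := hna C hCm hμC
      refine ⟨B, hBC.trans hCA, hBm, ?_, ?_⟩
      · intro hb
        exact hB0 (hzero B hBm hb)
      · intro hb
        exact hB0 (by rw [hμdiff hA hBm (hBC.trans hCA) hb, hμA])
    · obtain ⟨B, hBA, hBm, hB0, hBne⟩ := hna A hA hμA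
      refine ⟨B, hBA, hBm, ?_, ?_⟩
      · intro hb
        exact hB0 (hzero B hBm hb)
      · intro hb
        exact hBne (hμdiff hA hBm hBA hb)
  set L : List (SignedMeasure X) := List.ofFn sm with hL
  have hLC : ∀ s ∈ L, Lyap.Ctrl ν s := by
    intro s hs
    obtain ⟨i, hi⟩ := List.mem_ofFn.mp hs
    rw [← hi]
    exact hCtrl i
  obtain ⟨D, hDmono, hDgood, hDval⟩ := Lyap.fam_all hNA L hLC Set.univ MeasurableSet.univ
  set V := D β with hV
  have hVm : MeasurableSet V := (hDgood β).1
  have hVs : ∀ i, sm i V = β * sm i Set.univ := fun i =>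
    (hDval β hβ).2 (sm i) (by rw [hL]; exact List.mem_ofFn.mpr ⟨i, rfl⟩)
  have hμV : μ V = β • μ Set.univ := by
    refine PiLp.ext fun i => ?_
    have h1 : μ V i = sm i V := (hsm_apply i V).symm
    rw [h1, hVs i, hsm_apply]
    rfl
  have hcompl : μ Vᶜ = μ Set.univ - μ V := by
    have := VectorMeasure.of_diff (v := μ) hVm MeasurableSet.univ (Set.subset_univ V)
    rw [Set.compl_eq_univ_diff]
    exact this
  refine ⟨V, hVm, hμV, ?_⟩
  rw [hcompl, hμV, sub_smul, one_smul]
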